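/- With r a power of 2, r ≥ 4, let S = ℤ₃^r with coordinates indexed by ℤ_r, and let ρ act on S by (x_0,…,x_{r−1}) ↦ (x_1, x_2, …, x_{r−1}, −x_0). Then the only nonzero proper ρ-invariant subgroups of S are N = {(x+y, x, y, x−y) : x,y ∈ ℤ₃^{r/4}} and N* = {(−x+y, x, y, x+y) : x,y ∈ ℤ₃^{r/4}} (blocks of length r/4 each). -/

import Mathlib

/-- The twisted cyclic shift ρ on S = ℤ₃^r (coordinates indexed by ℤ_r):
`(x_0,…,x_{r−1}) ↦ (x_1, x_2, …, x_{r−1}, −x_0)`. -/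
def rhoAct (r : ℕ) (n : ZMod r → ZMod 3) : ZMod r → ZMod 3 :=
  fun i => if i + 1 = 0 then -n (i + 1) else n (i + 1)

/-- N = {(x+y, x, y, x−y) : x, y ∈ ℤ₃^{r/4}}, in four blocks of length r/4. -/
def Nset (r : ℕ) : Set (ZMod r → ZMod 3) :=
  {n | ∃ x y : Fin (r / 4) → ZMod 3, ∀ i : Fin (r / 4),
    n ((i : ℕ) : ZMod r) = x i + y i ∧
    n ((((i : ℕ) + r / 4 : ℕ)) : ZMod r) = x i ∧
    n ((((i : ℕ) + r / 2 : ℕ)) : ZMod r) = y i ∧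
    n ((((i : ℕ) + 3 * (r / 4) : ℕ)) : ZMod r) = x i - y i}

/-- N* = {(−x+y, x, y, x+y) : x, y ∈ ℤ₃^{r/4}}, in four blocks of length r/4. -/
def NstarSet (r : ℕ) : Set (ZMod r → ZMod 3) :=
  {n | ∃ x y : Fin (r / 4) → ZMod 3, ∀ i : Fin (r / 4),
    n ((i : ℕ) : ZMod r) = -x i + y i ∧
    n ((((i : ℕ) + r / 4 : ℕ)) : ZMod r) = x i ∧
    n ((((i : ℕ) + r / 2 : ℕ)) : ZMod r) = y i ∧
    n ((((i : ℕ) + 3 * (r / 4) : ℕ)) : ZMod r) = x i + y i}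

namespace St11

/-- unrolled sequence with antiperiod r -/
def unroll (r : ℕ) (n : ZMod r → ZMod 3) (j : ℕ) : ZMod 3 :=
  (-1) ^ (j / r) * n (j : ZMod r)

variable {r : ℕ}

lemma unroll_add (n m : ZMod r → ZMod 3) (j : ℕ) :
    unroll r (n + m) j = unroll r n j + unroll r m j := by
  simp [unroll, mul_add]

lemma unroll_neg (n : ZMod r → ZMod 3) (j : ℕ) :
    unroll r (-n) j = -unroll r n j := by
  simp [unroll]

lemma unroll_zero (j : ℕ) : unroll r (0 : ZMod r → ZMod 3) j = 0 := by
  simp [unroll]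

lemma unroll_sub (n m : ZMod r → ZMod 3) (j : ℕ) :
    unroll r (n - m) j = unroll r n j - unroll r m j := by
  simp [unroll, mul_sub]

lemma unroll_smul (c : ZMod 3) (n : ZMod r → ZMod 3) (j : ℕ) :
    unroll r (c • n) j = c * unroll r n j := by
  simp [unroll]; ring

lemma unroll_apply_lt (n : ZMod r → ZMod 3) {j : ℕ} (hj : j < r) :
    unroll r n j = n (j : ZMod r) := by
  simp [unroll, Nat.div_eq_of_lt hj]

lemma unroll_antiperiod (hr : 0 < r) (n : ZMod r → ZMod 3) (j : ℕ) :
    unroll r n (j + r) = -unroll r n j := by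
  have h1 : ((j + r : ℕ) : ZMod r) = (j : ZMod r) := by
    push_cast [ZMod.natCast_self]; ring
  have h2 : (j + r) / r = j / r + 1 := by
    rw [Nat.add_div_right _ hr]
  simp only [unroll, h1, h2, pow_succ]
  ring

lemma unroll_val (hr : 0 < r) (n : ZMod r → ZMod 3) (i : ZMod r) :
    unroll r n i.val = n i := by
  haveI : NeZero r := ⟨hr.ne'⟩
  rw [unroll_apply_lt n (ZMod.val_lt i), ZMod.natCast_val, ZMod.cast_id]

lemma ext_unroll (hr : 0 < r) {n m : ZMod r → ZMod 3}
    (h : ∀ j, unroll r n j = unroll r m j) : n = m := by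
  funext i
  have := h i.val
  rwa [unroll_val hr, unroll_val hr] at this

lemma unroll_rho (hr : 0 < r) (n : ZMod r → ZMod 3) (j : ℕ) :
    unroll r (rhoAct r n) j = unroll r n (j + 1) := by
  haveI : NeZero r := ⟨hr.ne'⟩
  have hcast : ((j : ZMod r) + 1) = ((j + 1 : ℕ) : ZMod r) := by push_cast; ring
  have hdvd : ((j + 1 : ℕ) : ZMod r) = 0 ↔ r ∣ (j + 1) := ZMod.natCast_eq_zero_iff _ _
  rw [unroll, unroll, rhoAct, hcast, Nat.succ_div]
  by_cases h : r ∣ (j + 1)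
  · rw [if_pos (hdvd.mpr h), if_pos h, pow_add]; ring
  · rw [if_neg (fun hh => h (hdvd.mp hh)), if_neg h]; simp

lemma unroll_iter (hr : 0 < r) (n : ZMod r → ZMod 3) (k j : ℕ) :
    unroll r ((rhoAct r)^[k] n) j = unroll r n (j + k) := by
  induction k generalizing j n with
  | zero => rfl
  | succ k ih =>
      rw [Function.iterate_succ_apply, ih (rhoAct r n) j, unroll_rho hr]
      ring_nf
/-- The subgroup cut out by the recurrence `u (j+2q) = ε · u (j+q) + u j` on the unrolled
sequence.  `ε = -1` gives `N`, `ε = 1` gives `N*`. -/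
def blockSG (r q : ℕ) (ε : ZMod 3) : AddSubgroup (ZMod r → ZMod 3) where
  carrier := {n | ∀ j : ℕ, unroll r n (j + 2*q) = ε * unroll r n (j + q) + unroll r n j}
  add_mem' := by
    intro n m hn hm j
    simp only [unroll_add, hn j, hm j]; ring
  zero_mem' := by intro j; simp [unroll_zero]
  neg_mem' := by
    intro n hn j
    simp only [unroll_neg, hn j]; ring

lemma mem_blockSG_iff {q : ℕ} {ε : ZMod 3} {n : ZMod r → ZMod 3} :
    n ∈ blockSG r q ε ↔
      ∀ j : ℕ, unroll r n (j + 2*q) = ε * unroll r n (j + q) + unroll r n j := Iff.rfl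

/-- To verify the recurrence it is enough to verify it for `j < r`. -/
lemma mem_blockSG_of_lt (hr : 0 < r) {q : ℕ} {ε : ZMod 3} {n : ZMod r → ZMod 3}
    (h : ∀ j < r, unroll r n (j + 2*q) = ε * unroll r n (j + q) + unroll r n j) :
    n ∈ blockSG r q ε := by
  intro j
  induction j using Nat.strong_induction_on with
  | _ j ih =>
    rcases lt_or_ge j r with hj | hj
    · exact h j hj
    · obtain ⟨m, rfl⟩ : ∃ m, j = m + r := ⟨j - r, by omega⟩
      have h1 : m + r + 2*q = (m + 2*q) + r := by ring
      have h2 : m + r + q = (m + q) + r := by ring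
      rw [h1, h2, unroll_antiperiod hr, unroll_antiperiod hr, unroll_antiperiod hr,
        ih m (by omega)]
      ring
lemma zid1 : ∀ u v : ZMod 3, v = -1 * u + (u + v) := by decide
lemma zid2 : ∀ u v : ZMod 3, u - v = -1 * v + u := by decide
lemma zid3 : ∀ u v : ZMod 3, -(u + v) = -1 * (u - v) + v := by decide
lemma zid4 : ∀ u v : ZMod 3, -u = -1 * (-(u + v)) + (u - v) := by decide
lemma zid5 : ∀ u v : ZMod 3, v = 1 * u + (-u + v) := by decide
lemma zid6 : ∀ u v : ZMod 3, u + v = 1 * v + u := by decide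
lemma zid7 : ∀ u v : ZMod 3, -(-u + v) = 1 * (u + v) + v := by decide
lemma zid8 : ∀ u v : ZMod 3, -u = 1 * (-(-u + v)) + (u + v) := by decide

variable {q : ℕ}

lemma Nset_eq (hrq : r = 4 * q) (hq : 0 < q) :
    Nset r = ↑(blockSG r q (-1)) := by
  have hr : 0 < r := by omega
  have h4 : r / 4 = q := by omega
  have h2 : r / 2 = 2 * q := by omega
  ext n
  simp only [Nset, Set.mem_setOf_eq, SetLike.mem_coe]
  constructor
  · rintro ⟨x, y, hxy⟩
    have R1 : ∀ i, i < q → n ((i : ℕ) : ZMod r)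
        = n ((i + q : ℕ) : ZMod r) + n ((i + 2*q : ℕ) : ZMod r) := by
      intro i hi
      have hi' : i < r / 4 := by omega
      obtain ⟨e0, e1, e2, e3⟩ := hxy ⟨i, hi'⟩
      set X := x ⟨i, hi'⟩ with hX
      set Y := y ⟨i, hi'⟩ with hY
      have e0' : n ((i : ℕ) : ZMod r) = X + Y := e0
      have e1' : n ((i + r/4 : ℕ) : ZMod r) = X := e1
      have e2' : n ((i + r/2 : ℕ) : ZMod r) = Y := e2
      rw [h4] at e1'; rw [h2] at e2'
      rw [e0', ← e1', ← e2']
    have R2 : ∀ i, i < q → n ((i + 3*q : ℕ) : ZMod r)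
        = n ((i + q : ℕ) : ZMod r) - n ((i + 2*q : ℕ) : ZMod r) := by
      intro i hi
      have hi' : i < r / 4 := by omega
      obtain ⟨e0, e1, e2, e3⟩ := hxy ⟨i, hi'⟩
      set X := x ⟨i, hi'⟩ with hX
      set Y := y ⟨i, hi'⟩ with hY
      have e3' : n ((i + 3*(r/4) : ℕ) : ZMod r) = X - Y := e3
      have e1' : n ((i + r/4 : ℕ) : ZMod r) = X := e1
      have e2' : n ((i + r/2 : ℕ) : ZMod r) = Y := e2
      rw [h4] at e3' e1'; rw [h2] at e2'
      rw [e3', ← e1', ← e2']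
    apply mem_blockSG_of_lt hr
    intro j hj
    obtain ⟨c, i, hc, hi, rfl⟩ : ∃ c i, c < 4 ∧ i < q ∧ j = q * c + i := by
      refine ⟨j / q, j % q, ?_, Nat.mod_lt _ hq, (Nat.div_add_mod j q).symm⟩
      rw [Nat.div_lt_iff_lt_mul hq]; omega
    rcases (by omega : c = 0 ∨ c = 1 ∨ c = 2 ∨ c = 3) with rfl | rfl | rfl | rfl
    · rw [show q*0+i = i from by ring,
unroll_apply_lt n (show i + 2*q < r by omega),
        unroll_apply_lt n (show i + q < r by omega),
        unroll_apply_lt n (show i < r by omega),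
        R1 i hi]
      exact zid1 _ _
    · rw [show q*1+i = i + q from by ring, show i + q + 2*q = i + 3*q from by ring, show i + q + q = i + 2*q from by ring,
        unroll_apply_lt n (show i + 3*q < r by omega),
        unroll_apply_lt n (show i + 2*q < r by omega),
        unroll_apply_lt n (show i + q < r by omega),
        R2 i hi]
      exact zid2 _ _
    · rw [show q*2+i = i + 2*q from by ring, show i + 2*q + 2*q = i + r from by omega, unroll_antiperiod hr,
        show i + 2*q + q = i + 3*q from by ring,
        unroll_apply_lt n (show i + 3*q < r by omega),
        unroll_apply_lt n (show i + 2*q < r by omega),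
        unroll_apply_lt n (show i < r by omega),
        R1 i hi, R2 i hi]
      exact zid3 _ _
    · rw [show q*3+i = i + 3*q from by ring, show i + 3*q + 2*q = (i + q) + r from by omega, unroll_antiperiod hr,
        show i + 3*q + q = i + r from by omega, unroll_antiperiod hr,
        unroll_apply_lt n (show i + 3*q < r by omega),
        unroll_apply_lt n (show i + q < r by omega),
        unroll_apply_lt n (show i < r by omega),
        R1 i hi, R2 i hi]
      exact zid4 _ _
  · intro hn
    rw [h4, h2]
    refine ⟨fun i => n (((i : ℕ) + q : ℕ) : ZMod r),
      fun i => n (((i : ℕ) + 2*q : ℕ) : ZMod r), fun i => ?_⟩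
    have hi : (i : ℕ) < q := i.isLt
    have hrec0 := hn (i : ℕ)
    have hrec1 := hn ((i : ℕ) + q)
    rw [unroll_apply_lt n (show (i:ℕ) + 2*q < r by omega),
      unroll_apply_lt n (show (i:ℕ) + q < r by omega),
      unroll_apply_lt n (show (i:ℕ) < r by omega)] at hrec0
    rw [show (i:ℕ) + q + 2*q = (i:ℕ) + 3*q from by ring,
      show (i:ℕ) + q + q = (i:ℕ) + 2*q from by ring,
      unroll_apply_lt n (show (i:ℕ) + 3*q < r by omega),
      unroll_apply_lt n (show (i:ℕ) + 2*q < r by omega),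
      unroll_apply_lt n (show (i:ℕ) + q < r by omega)] at hrec1
    refine ⟨by linear_combination -hrec0, rfl, rfl, by linear_combination hrec1⟩

lemma NstarSet_eq (hrq : r = 4 * q) (hq : 0 < q) :
    NstarSet r = ↑(blockSG r q 1) := by
  have hr : 0 < r := by omega
  have h4 : r / 4 = q := by omega
  have h2 : r / 2 = 2 * q := by omega
  ext n
  simp only [NstarSet, Set.mem_setOf_eq, SetLike.mem_coe]
  constructor
  · rintro ⟨x, y, hxy⟩
    have R1 : ∀ i, i < q → n ((i : ℕ) : ZMod r)
        = -n ((i + q : ℕ) : ZMod r) + n ((i + 2*q : ℕ) : ZMod r) := by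
      intro i hi
      have hi' : i < r / 4 := by omega
      obtain ⟨e0, e1, e2, e3⟩ := hxy ⟨i, hi'⟩
      set X := x ⟨i, hi'⟩ with hX
      set Y := y ⟨i, hi'⟩ with hY
      have e0' : n ((i : ℕ) : ZMod r) = -X + Y := e0
      have e1' : n ((i + r/4 : ℕ) : ZMod r) = X := e1
      have e2' : n ((i + r/2 : ℕ) : ZMod r) = Y := e2
      rw [h4] at e1'; rw [h2] at e2'
      rw [e0', ← e1', ← e2']
    have R2 : ∀ i, i < q → n ((i + 3*q : ℕ) : ZMod r)
        = n ((i + q : ℕ) : ZMod r) + n ((i + 2*q : ℕ) : ZMod r) := by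
      intro i hi
      have hi' : i < r / 4 := by omega
      obtain ⟨e0, e1, e2, e3⟩ := hxy ⟨i, hi'⟩
      set X := x ⟨i, hi'⟩ with hX
      set Y := y ⟨i, hi'⟩ with hY
      have e3' : n ((i + 3*(r/4) : ℕ) : ZMod r) = X + Y := e3
      have e1' : n ((i + r/4 : ℕ) : ZMod r) = X := e1
      have e2' : n ((i + r/2 : ℕ) : ZMod r) = Y := e2
      rw [h4] at e3' e1'; rw [h2] at e2'
      rw [e3', ← e1', ← e2']
    apply mem_blockSG_of_lt hr
    intro j hj
    obtain ⟨c, i, hc, hi, rfl⟩ : ∃ c i, c < 4 ∧ i < q ∧ j = q * c + i := by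
      refine ⟨j / q, j % q, ?_, Nat.mod_lt _ hq, (Nat.div_add_mod j q).symm⟩
      rw [Nat.div_lt_iff_lt_mul hq]; omega
    rcases (by omega : c = 0 ∨ c = 1 ∨ c = 2 ∨ c = 3) with rfl | rfl | rfl | rfl
    · rw [show q*0+i = i from by ring,
unroll_apply_lt n (show i + 2*q < r by omega),
        unroll_apply_lt n (show i + q < r by omega),
        unroll_apply_lt n (show i < r by omega),
        R1 i hi]
      exact zid5 _ _
    · rw [show q*1+i = i + q from by ring, show i + q + 2*q = i + 3*q from by ring, show i + q + q = i + 2*q from by ring,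
        unroll_apply_lt n (show i + 3*q < r by omega),
        unroll_apply_lt n (show i + 2*q < r by omega),
        unroll_apply_lt n (show i + q < r by omega),
        R2 i hi]
      exact zid6 _ _
    · rw [show q*2+i = i + 2*q from by ring, show i + 2*q + 2*q = i + r from by omega, unroll_antiperiod hr,
        show i + 2*q + q = i + 3*q from by ring,
        unroll_apply_lt n (show i + 3*q < r by omega),
        unroll_apply_lt n (show i + 2*q < r by omega),
        unroll_apply_lt n (show i < r by omega),
        R1 i hi, R2 i hi]
      exact zid7 _ _
    · rw [show q*3+i = i + 3*q from by ring, show i + 3*q + 2*q = (i + q) + r from by omega, unroll_antiperiod hr,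
        show i + 3*q + q = i + r from by omega, unroll_antiperiod hr,
        unroll_apply_lt n (show i + 3*q < r by omega),
        unroll_apply_lt n (show i + q < r by omega),
        unroll_apply_lt n (show i < r by omega),
        R1 i hi, R2 i hi]
      exact zid8 _ _
  · intro hn
    rw [h4, h2]
    refine ⟨fun i => n (((i : ℕ) + q : ℕ) : ZMod r),
      fun i => n (((i : ℕ) + 2*q : ℕ) : ZMod r), fun i => ?_⟩
    have hi : (i : ℕ) < q := i.isLt
    have hrec0 := hn (i : ℕ)
    have hrec1 := hn ((i : ℕ) + q)
    rw [unroll_apply_lt n (show (i:ℕ) + 2*q < r by omega),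
      unroll_apply_lt n (show (i:ℕ) + q < r by omega),
      unroll_apply_lt n (show (i:ℕ) < r by omega)] at hrec0
    rw [show (i:ℕ) + q + 2*q = (i:ℕ) + 3*q from by ring,
      show (i:ℕ) + q + q = (i:ℕ) + 2*q from by ring,
      unroll_apply_lt n (show (i:ℕ) + 3*q < r by omega),
      unroll_apply_lt n (show (i:ℕ) + 2*q < r by omega),
      unroll_apply_lt n (show (i:ℕ) + q < r by omega)] at hrec1
    refine ⟨by linear_combination -hrec0, rfl, rfl, by linear_combination hrec1⟩

end St11
lemma St11.natCast_val_smul {r : ℕ} (a : ZMod 3) (n : ZMod r → ZMod 3) :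
    ((a.val : ℕ) : ZMod 3) • n = a • n := by
  rw [ZMod.natCast_val, ZMod.cast_id]
open Polynomial in
/-- three is zero in `(ZMod 3)[X]` -/
lemma three_eq_zero : (3 : (ZMod 3)[X]) = 0 := by
  have h : (3 : (ZMod 3)[X]) = C ((3 : ℕ) : ZMod 3) := by
    rw [map_natCast C]; norm_num
  rw [h, show ((3 : ℕ) : ZMod 3) = 0 from by decide, map_zero]

/-- ρ as a linear map -/
def rhoLin (r : ℕ) : (ZMod r → ZMod 3) →ₗ[ZMod 3] (ZMod r → ZMod 3) where
  toFun := rhoAct r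
  map_add' := by
    intro n m; funext i; simp only [rhoAct, Pi.add_apply]; split <;> ring
  map_smul' := by
    intro c n; funext i
    simp only [rhoAct, Pi.smul_apply, RingHom.id_apply, smul_eq_mul]
    split <;> ring

open Polynomial

noncomputable def hpoly (q : ℕ) (ε : ZMod 3) : (ZMod 3)[X] := X^(2*q) + C ε * X^q - 1

lemma hpoly_mul (q : ℕ) : hpoly q 1 * hpoly q (-1) = X^(4*q) + 1 := by
  simp only [hpoly, map_one, map_neg, one_mul, neg_mul]
  have h3 := three_eq_zero
  linear_combination (-(X^(2*q)) : (ZMod 3)[X]) * h3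

lemma hpoly_bezout (q : ℕ) :
    (1 - X^q) * hpoly q 1 + (1 + X^q) * hpoly q (-1) = 1 := by
  simp only [hpoly, map_one, map_neg, one_mul, neg_mul]
  have h3 := three_eq_zero
  linear_combination (-1 : (ZMod 3)[X]) * h3

lemma aeval_hpoly_apply {r q : ℕ} (ε : ZMod 3) (n : ZMod r → ZMod 3) :
    aeval (rhoLin r) (hpoly q ε) n
      = (rhoAct r)^[2*q] n + ε • (rhoAct r)^[q] n - n := by
  simp only [hpoly, map_sub, map_add, map_mul, map_pow, aeval_X, aeval_C, map_one,
    LinearMap.sub_apply, LinearMap.add_apply, Module.End.mul_apply,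
    Module.algebraMap_end_apply, Module.End.pow_apply, Module.End.one_apply]
  rfl

lemma St11.mem_blockSG_iff_aeval {r q : ℕ} (hr : 0 < r) (ε : ZMod 3) (n : ZMod r → ZMod 3) :
    aeval (rhoLin r) (hpoly q ε) n = 0 ↔ n ∈ St11.blockSG r q (-ε) := by
  rw [aeval_hpoly_apply]
  constructor
  · intro h j
    have h0 : St11.unroll r ((rhoAct r)^[2*q] n + ε • (rhoAct r)^[q] n - n) j = 0 := by
      rw [h, St11.unroll_zero]
    rw [St11.unroll_sub, St11.unroll_add, St11.unroll_smul,
      St11.unroll_iter hr, St11.unroll_iter hr] at h0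
    linear_combination h0
  · intro h
    apply St11.ext_unroll hr (m := 0)
    intro j
    rw [St11.unroll_zero, St11.unroll_sub, St11.unroll_add, St11.unroll_smul,
      St11.unroll_iter hr, St11.unroll_iter hr]
    linear_combination (h j)

lemma aeval_anni {r q : ℕ} (hrq : r = 4 * q) (hq : 0 < q) (n : ZMod r → ZMod 3) :
    aeval (rhoLin r) (X^(4*q) + 1 : (ZMod 3)[X]) n = 0 := by
  have hr : 0 < r := by omega
  simp only [map_add, map_pow, aeval_X, map_one, LinearMap.add_apply,
    Module.End.pow_apply, Module.End.one_apply]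
  have hco : ⇑(rhoLin r) = rhoAct r := rfl
  rw [hco]
  apply St11.ext_unroll hr (m := 0)
  intro j
  rw [St11.unroll_zero, St11.unroll_add, St11.unroll_iter hr,
    show j + 4*q = j + r from by omega, St11.unroll_antiperiod hr]
  ring

lemma aeval_mul_apply {r : ℕ} (p s : (ZMod 3)[X]) (n : ZMod r → ZMod 3) :
    aeval (rhoLin r) (p * s) n = aeval (rhoLin r) p (aeval (rhoLin r) s n) := by
  rw [map_mul, Module.End.mul_apply]

lemma aeval_mem {r : ℕ} {H : AddSubgroup (ZMod r → ZMod 3)}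
    (hH : ∀ n ∈ H, rhoAct r n ∈ H) (p : (ZMod 3)[X]) :
    ∀ n ∈ H, aeval (rhoLin r) p n ∈ H := by
  induction p using Polynomial.induction_on with
  | C a =>
      intro n hn
      have : aeval (rhoLin r) (C a) n = a • n := by
        have h : (C a : (ZMod 3)[X]) = a • (1 : (ZMod 3)[X]) := by rw [← C_mul' a 1, mul_one]
        rw [h, map_smul, map_one]
        rfl
      rw [this, ← St11.natCast_val_smul a n]
      · rw [Nat.cast_smul_eq_nsmul]
        exact AddSubgroup.nsmul_mem H hn _
  | add p s hp hs =>
      intro n hn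
      rw [map_add, LinearMap.add_apply]
      exact add_mem (hp n hn) (hs n hn)
  | monomial k a ih =>
      intro n hn
      have : C a * X^(k+1) = X * (C a * X^k) := by ring
      rw [this, aeval_mul_apply]
      have h1 : aeval (rhoLin r) (C a * X ^ k) n ∈ H := ih n hn
      have : aeval (rhoLin r) (X : (ZMod 3)[X]) (aeval (rhoLin r) (C a * X^k) n)
          = rhoAct r (aeval (rhoLin r) (C a * X^k) n) := by
        rw [aeval_X]; rfl
      rw [this]
      exact hH _ h1
lemma two_pow_fact : ∀ k, 1 ≤ k → ∃ c, 3^(2^k) = 1 + 2^(k+2) + 2^(k+3) * c := by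
  intro k hk
  induction k with
  | zero => omega
  | succ k ih =>
      rcases Nat.eq_or_lt_of_le hk with h | h
      · have hk0 : k = 0 := by omega
        subst hk0
        exact ⟨0, by norm_num⟩
      · have hk1 : 1 ≤ k := by omega
        obtain ⟨c, hc⟩ := ih hk1
        refine ⟨c + 2^k * (1 + 2*c)^2, ?_⟩
        have h1 : 3^(2^(k+1)) = (3^(2^k))^2 := by
          rw [← pow_mul, pow_succ]
        rw [h1, hc]
        ring
lemma nt_main (a d : ℕ) (ha : 2 ≤ a) (hd : 0 < d) (hdvd : 2^(a+1) ∣ 3^d - 1) :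
    2^(a-1) ≤ d := by
  have hM : 1 < 2^(a+1) := by
    have : (2:ℕ)^1 ≤ 2^(a+1) := Nat.pow_le_pow_right (by norm_num) (by omega)
    omega
  haveI : NeZero (2^(a+1)) := ⟨by omega⟩
  have hcop : Nat.Coprime 3 (2^(a+1)) := Nat.Coprime.pow_right _ (by norm_num)
  set u : (ZMod (2^(a+1)))ˣ := ZMod.unitOfCoprime 3 hcop with hu
  have hcast : ((u : ZMod (2^(a+1)))) = ((3:ℕ) : ZMod (2^(a+1))) := ZMod.coe_unitOfCoprime 3 hcop
  have hx : ((3:ℕ) : ZMod (2^(a+1)))^d = 1 := by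
    have h2 : (((3:ℕ)^d - 1 : ℕ) : ZMod (2^(a+1))) = 0 :=
      (ZMod.natCast_eq_zero_iff _ _).mpr hdvd
    have h1 : (3:ℕ)^d = (3^d - 1) + 1 := by
      have := Nat.one_le_pow d 3 (by norm_num); omega
    calc ((3:ℕ) : ZMod (2^(a+1)))^d = (((3:ℕ)^d : ℕ) : ZMod (2^(a+1))) := by push_cast; ring
      _ = (((3:ℕ)^d - 1 : ℕ) : ZMod (2^(a+1))) + 1 := by rw [h1]; push_cast; ring
      _ = 1 := by rw [h2]; ring
  have hpowd : u ^ d = 1 :=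
    Units.ext (by rw [Units.val_pow_eq_pow_val, hcast, hx, Units.val_one])
  have htd : orderOf u ∣ d := orderOf_dvd_of_pow_eq_one hpowd
  have htcard : orderOf u ∣ 2^a := by
    have h1 : orderOf u ∣ Fintype.card (ZMod (2^(a+1)))ˣ := orderOf_dvd_card
    rwa [ZMod.card_units_eq_totient, Nat.totient_prime_pow Nat.prime_two (by omega : 0 < a+1),
      show a + 1 - 1 = a from by omega, show 2 - 1 = 1 from rfl, mul_one] at h1
  obtain ⟨j, hj, hjeq⟩ := (Nat.dvd_prime_pow Nat.prime_two).mp htcard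
  have hjge : a - 1 ≤ j := by
    by_contra hcon
    have hj2 : j ≤ a - 2 := by omega
    have hdvd2 : orderOf u ∣ 2^(a-2) := hjeq ▸ pow_dvd_pow 2 hj2
    have hpow2 : u ^ (2^(a-2)) = 1 := orderOf_dvd_iff_pow_eq_one.mp hdvd2
    have hzm : ((3:ℕ) : ZMod (2^(a+1)))^(2^(a-2)) = 1 := by
      have h6 := congrArg (Units.val) hpow2
      rwa [Units.val_pow_eq_pow_val, hcast, Units.val_one] at h6
    have hge := Nat.one_le_pow (2^(a-2)) 3 (by norm_num)
    have hdvd3 : 2^(a+1) ∣ 3^(2^(a-2)) - 1 := by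
      apply (ZMod.natCast_eq_zero_iff _ _).mp
      rw [Nat.cast_sub hge]
      push_cast at hzm ⊢
      rw [hzm]; ring
    rcases Nat.eq_or_lt_of_le ha with h2 | h2
    · rw [← h2] at hdvd3
      norm_num at hdvd3
    · obtain ⟨c, hc⟩ := two_pow_fact (a-2) (by omega)
      have hc' : 3^(2^(a-2)) = 1 + 2^(a-2+2) * (1+2*c) := by rw [hc, pow_succ]; ring
      have h3 : 3^(2^(a-2)) - 1 = 2^(a-2+2) * (1+2*c) := by rw [hc']; simp
      rw [h3] at hdvd3
      have h4 : a + 1 = (a-2+2) + 1 := by omega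
      rw [h4, pow_succ] at hdvd3
      obtain ⟨m, hm⟩ := hdvd3
      have h5 : 1 + 2*c = 2 * m := by
        have hpos : 0 < 2^(a-2+2) := Nat.pow_pos (by norm_num)
        rw [mul_assoc] at hm
        exact Nat.eq_of_mul_eq_mul_left hpos hm
      omega
  calc 2^(a-1) ≤ 2^j := Nat.pow_le_pow_right (by norm_num) hjge
    _ = orderOf u := hjeq.symm
    _ ≤ d := Nat.le_of_dvd hd htd
lemma hpoly_monic_deg {q : ℕ} (hq : 0 < q) (ε : ZMod 3) :
    (hpoly q ε).Monic ∧ (hpoly q ε).natDegree = 2*q := by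
  have hsplit : hpoly q ε = X^(2*q) + (C ε * X^q - 1) := by rw [hpoly]; ring
  have hdlt : (C ε * X^q - (1:(ZMod 3)[X])).degree < ((2*q : ℕ) : WithBot ℕ) := by
    apply lt_of_le_of_lt (degree_sub_le _ _)
    rw [sup_lt_iff]
    constructor
    · rcases eq_or_ne ε 0 with h | h
      · simp only [h, map_zero, zero_mul, degree_zero]
        exact WithBot.bot_lt_coe _
      · rw [degree_C_mul h, degree_X_pow]
        exact_mod_cast (by omega : q < 2*q)
    · apply lt_of_le_of_lt degree_one_le
      exact_mod_cast (by omega : (0:ℕ) < 2*q)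
  constructor
  · rw [hsplit]; exact monic_X_pow_add hdlt
  · rw [hsplit]
    apply natDegree_eq_of_degree_eq_some
    rw [degree_add_eq_left_of_degree_lt, degree_X_pow]
    rw [degree_X_pow]; exact hdlt
lemma key_degree_bound {a : ℕ} (ha : 2 ≤ a) {p : (ZMod 3)[X]} (hmon : p.Monic)
    (hirr : Irreducible p) (hp4 : p ∣ X^(2^a) + 1) : 2^(a-1) ≤ p.natDegree := by
  have hp0 : p ≠ 0 := hmon.ne_zero
  haveI : Fact (Irreducible p) := ⟨hirr⟩
  haveI : Module.Finite (ZMod 3) (AdjoinRoot p) :=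
    Module.Finite.of_basis (AdjoinRoot.powerBasis hp0).basis
  haveI : Finite (AdjoinRoot p) := Module.finite_of_finite (ZMod 3)
  haveI : Fintype (AdjoinRoot p) := Fintype.ofFinite _
  haveI : DecidableEq (AdjoinRoot p) := Classical.decEq _
  have hcard : Fintype.card (AdjoinRoot p) = 3 ^ p.natDegree := by
    rw [Module.card_fintype (AdjoinRoot.powerBasis hp0).basis, ZMod.card]
    congr 1
    rw [Fintype.card_fin]
    exact AdjoinRoot.powerBasis_dim hp0
  haveI : CharP (AdjoinRoot p) 3 :=
    charP_of_injective_algebraMap (algebraMap (ZMod 3) (AdjoinRoot p)).injective 3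
  haveI : Fact (2 < 3) := ⟨by norm_num⟩
  have hne : (-1 : AdjoinRoot p) ≠ 1 := CharP.neg_one_ne_one _ 3
  set α := AdjoinRoot.root p with hα_def
  have hroot : α^(2^a) + 1 = 0 := by
    have h0 : (aeval α) ((X:(ZMod 3)[X])^(2^a) + 1) = 0 := by
      rw [AdjoinRoot.aeval_eq, AdjoinRoot.mk_eq_zero]
      exact hp4
    simpa using h0
  have hα : α^(2^a) = -1 := eq_neg_of_add_eq_zero_left hroot
  have hα0 : α ≠ 0 := by
    intro h0
    rw [h0, zero_pow (by positivity : (2:ℕ)^a ≠ 0)] at hα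
    have h1 : (1 : AdjoinRoot p) = 0 := by linear_combination hα
    exact one_ne_zero h1
  set u : (AdjoinRoot p)ˣ := Units.mk0 α hα0 with hu_def
  have hu1 : u ^ (2^(a+1)) = 1 := by
    apply Units.ext
    rw [Units.val_pow_eq_pow_val, Units.val_one]
    show α ^ (2^(a+1)) = 1
    rw [show (2:ℕ)^(a+1) = 2^a * 2 from by rw [pow_succ], pow_mul, hα]
    ring
  have hu2 : u ^ (2^a) ≠ 1 := by
    intro h
    have := congrArg (Units.val) h
    rw [Units.val_pow_eq_pow_val, Units.val_one] at this
    exact hne (hα ▸ this)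
  have hdvd1 : orderOf u ∣ 2^(a+1) := orderOf_dvd_of_pow_eq_one hu1
  obtain ⟨j, hj, hjeq⟩ := (Nat.dvd_prime_pow Nat.prime_two).mp hdvd1
  have hja : j = a + 1 := by
    by_contra h
    have hj2 : j ≤ a := by omega
    exact hu2 (orderOf_dvd_iff_pow_eq_one.mp (hjeq ▸ pow_dvd_pow 2 hj2))
  have hord : orderOf u = 2^(a+1) := by rw [hjeq, hja]
  have hcards : Fintype.card (AdjoinRoot p)ˣ = 3 ^ p.natDegree - 1 := by
    rw [Fintype.card_units, hcard]
  have hdvd2 : 2^(a+1) ∣ 3 ^ p.natDegree - 1 := by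
    rw [← hord, ← hcards]
    exact orderOf_dvd_card
  exact nt_main a p.natDegree ha hirr.natDegree_pos hdvd2

lemma hpoly_irred {a : ℕ} (ha : 2 ≤ a) (ε : ZMod 3) (hε : ε = 1 ∨ ε = -1) :
    Irreducible (hpoly (2^(a-2)) ε) := by
  set q : ℕ := 2^(a-2) with hq_def
  have hq : 0 < q := Nat.pow_pos (by norm_num)
  have h4q : 4*q = 2^a := by
    have h : (4:ℕ) * 2^(a-2) = 2^(2 + (a-2)) := by rw [pow_add]; norm_num
    rw [hq_def, h]; congr 1; omega
  have h2q : 2*q = 2^(a-1) := by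
    have h : (2:ℕ) * 2^(a-2) = 2^(1 + (a-2)) := by rw [pow_add]; norm_num
    rw [hq_def, h]; congr 1; omega
  obtain ⟨hm, hdeg⟩ := hpoly_monic_deg hq ε
  have hdvdh : hpoly q ε ∣ X^(2^a) + 1 := by
    rw [← h4q]
    rcases hε with rfl | rfl
    · exact ⟨hpoly q (-1), (hpoly_mul q).symm⟩
    · exact ⟨hpoly q 1, by rw [← hpoly_mul q]; ring⟩
  have hnu : ¬ IsUnit (hpoly q ε) :=
    not_isUnit_of_natDegree_pos _ (by omega)
  obtain ⟨p, hmon, hirr, hpdvd⟩ := exists_monic_irreducible_factor (hpoly q ε) hnu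
  have hkey : 2^(a-1) ≤ p.natDegree :=
    key_degree_bound ha hmon hirr (hpdvd.trans hdvdh)
  obtain ⟨c, hce⟩ := hpdvd
  have hp0 : p ≠ 0 := hmon.ne_zero
  have hc0 : c ≠ 0 := by
    rintro rfl
    rw [mul_zero] at hce
    exact hm.ne_zero hce
  have hdegs : (hpoly q ε).natDegree = p.natDegree + c.natDegree := by
    rw [hce, natDegree_mul hp0 hc0]
  have hcdeg : c.natDegree = 0 := by omega
  obtain ⟨b, hb⟩ := natDegree_eq_zero.mp hcdeg
  have hb1 : b = 1 := by
    have hlc := hm.leadingCoeff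
    rw [hce, ← hb, leadingCoeff_mul, hmon.leadingCoeff, one_mul, leadingCoeff_C] at hlc
    exact hlc
  have : hpoly q ε = p := by
    rw [hce, ← hb, hb1, map_one, mul_one]
  rw [this]
  exact hirr
lemma blockSG_eq_zero {r q : ℕ} (hrq : r = 4*q) (hq : 0 < q) {ε : ZMod 3}
    {d : ZMod r → ZMod 3} (hd : d ∈ St11.blockSG r q ε)
    (h1 : ∀ i, i < q → d ((i + q : ℕ) : ZMod r) = 0)
    (h2 : ∀ i, i < q → d ((i + 2*q : ℕ) : ZMod r) = 0) : d = 0 := by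
  have hr : 0 < r := by omega
  haveI : NeZero r := ⟨by omega⟩
  funext w
  show d w = 0
  rw [← St11.unroll_val hr d w]
  have hwlt : w.val < r := ZMod.val_lt w
  obtain ⟨c, i, hc, hi, hw⟩ : ∃ c i, c < 4 ∧ i < q ∧ w.val = q * c + i := by
    refine ⟨w.val / q, w.val % q, ?_, Nat.mod_lt _ hq, (Nat.div_add_mod _ q).symm⟩
    rw [Nat.div_lt_iff_lt_mul hq]; omega
  rw [hw]
  rcases (by omega : c = 0 ∨ c = 1 ∨ c = 2 ∨ c = 3) with rfl | rfl | rfl | rfl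
  · have e := hd i
    rw [St11.unroll_apply_lt d (show i + 2*q < r by omega),
      St11.unroll_apply_lt d (show i + q < r by omega),
      St11.unroll_apply_lt d (show i < r by omega),
      h1 i hi, h2 i hi] at e
    rw [show q*0+i = i from by ring, St11.unroll_apply_lt d (show i < r by omega)]
    linear_combination -e
  · rw [show q*1+i = i + q from by ring,
      St11.unroll_apply_lt d (show i + q < r by omega)]
    exact h1 i hi
  · rw [show q*2+i = i + 2*q from by ring,
      St11.unroll_apply_lt d (show i + 2*q < r by omega)]
    exact h2 i hi
  · have e := hd (i + q)
    rw [show i + q + 2*q = i + 3*q from by ring, show i + q + q = i + 2*q from by ring,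
      St11.unroll_apply_lt d (show i + 3*q < r by omega),
      St11.unroll_apply_lt d (show i + 2*q < r by omega),
      St11.unroll_apply_lt d (show i + q < r by omega),
      h1 i hi, h2 i hi] at e
    rw [show q*3+i = i + 3*q from by ring,
      St11.unroll_apply_lt d (show i + 3*q < r by omega)]
    linear_combination e

lemma blockSG_card_le {r q : ℕ} (hrq : r = 4*q) (hq : 0 < q) (ε : ZMod 3) :
    ((St11.blockSG r q ε : Set (ZMod r → ZMod 3))).ncard ≤ 3^(2*q) := by
  classical
  have hkey : Set.InjOn
      (fun n : ZMod r → ZMod 3 =>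
        ((fun i : Fin q => n (((i:ℕ) + q : ℕ) : ZMod r)),
         (fun i : Fin q => n (((i:ℕ) + 2*q : ℕ) : ZMod r))))
      (St11.blockSG r q ε) := by
    intro n hn m hm heq
    have hdm : n - m ∈ St11.blockSG r q ε := sub_mem hn hm
    have h1 : ∀ i, i < q → (n - m) ((i + q : ℕ) : ZMod r) = 0 := by
      intro i hi
      have := congrFun (congrArg Prod.fst heq) ⟨i, hi⟩
      simp only [Pi.sub_apply]
      simpa [sub_eq_zero] using this
    have h2 : ∀ i, i < q → (n - m) ((i + 2*q : ℕ) : ZMod r) = 0 := by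
      intro i hi
      have := congrFun (congrArg Prod.snd heq) ⟨i, hi⟩
      simp only [Pi.sub_apply]
      simpa [sub_eq_zero] using this
    have := blockSG_eq_zero hrq hq hdm h1 h2
    exact sub_eq_zero.mp this
  calc ((St11.blockSG r q ε : Set (ZMod r → ZMod 3))).ncard
      ≤ (Set.univ : Set ((Fin q → ZMod 3) × (Fin q → ZMod 3))).ncard :=
        Set.ncard_le_ncard_of_injOn _ (fun a _ => Set.mem_univ _) hkey Set.finite_univ
    _ = Nat.card ((Fin q → ZMod 3) × (Fin q → ZMod 3)) := Set.ncard_univ _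
    _ = 3^(2*q) := by
        rw [Nat.card_eq_fintype_card, Fintype.card_prod, Fintype.card_fun]
        simp [ZMod.card]
        rw [← pow_add]
        congr 1
        omega
open Polynomial in
lemma psum_coeff (m : ℕ) (c : Fin m → ZMod 3) (k : Fin m) :
    (∑ i : Fin m, C (c i) * X^(i:ℕ)).coeff (k:ℕ) = c k := by
  rw [finset_sum_coeff]
  rw [Finset.sum_eq_single k]
  · rw [coeff_C_mul, coeff_X_pow, if_pos rfl, mul_one]
  · intro b _ hb
    rw [coeff_C_mul, coeff_X_pow, if_neg (fun h => hb (Fin.ext h.symm)), mul_zero]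
  · intro h; exact absurd (Finset.mem_univ k) h

open Polynomial in
lemma blockSG_subset_of_mem {r q : ℕ} (hrq : r = 4*q) (hq : 0 < q) {ε : ZMod 3}
    (hirr : Irreducible (hpoly q (-ε)))
    {H : AddSubgroup (ZMod r → ZMod 3)} (hH : ∀ n ∈ H, rhoAct r n ∈ H)
    {v : ZMod r → ZMod 3} (hvH : v ∈ H) (hvN : v ∈ St11.blockSG r q ε) (hv0 : v ≠ 0) :
    (St11.blockSG r q ε : Set (ZMod r → ZMod 3)) ⊆ (H : Set (ZMod r → ZMod 3)) := by
  classical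
  have hr : 0 < r := by omega
  haveI : NeZero r := ⟨by omega⟩
  -- the annihilator ideal of v
  set I : Ideal (ZMod 3)[X] :=
    { carrier := {p | aeval (rhoLin r) p v = 0}
      add_mem' := by
        intro p s hp hs
        show aeval (rhoLin r) (p + s) v = 0
        rw [map_add, LinearMap.add_apply, hp, hs, add_zero]
      zero_mem' := by
        show aeval (rhoLin r) 0 v = 0
        rw [map_zero]; rfl
      smul_mem' := by
        intro s p hp
        show aeval (rhoLin r) (s * p) v = 0
        rw [aeval_mul_apply, hp, map_zero] } with hI_def
  have hmemI : ∀ p : (ZMod 3)[X], p ∈ I ↔ aeval (rhoLin r) p v = 0 := fun p => Iff.rfl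
  have hgI : hpoly q (-ε) ∈ I := by
    rw [hmemI, St11.mem_blockSG_iff_aeval hr]
    rwa [neg_neg]
  haveI hprin : I.IsPrincipal := IsPrincipalIdealRing.principal I
  have hspan : Ideal.span {Submodule.IsPrincipal.generator I} = I :=
    Submodule.IsPrincipal.span_singleton_generator I
  have hdvd : Submodule.IsPrincipal.generator I ∣ hpoly q (-ε) := by
    rw [← Ideal.mem_span_singleton, hspan]; exact hgI
  obtain ⟨c0, hc0⟩ := hdvd
  have hIeq : I = Ideal.span {hpoly q (-ε)} := by
    rcases hirr.isUnit_or_isUnit hc0 with hu | hu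
    · exfalso
      have h1 : (1 : (ZMod 3)[X]) ∈ I := by
        rw [← hspan, Ideal.span_singleton_eq_top.mpr hu]
        exact Submodule.mem_top
      rw [hmemI, map_one, Module.End.one_apply] at h1
      exact hv0 h1
    · rw [← hspan]
      apply Ideal.span_singleton_eq_span_singleton.mpr
      exact ⟨hu.unit, hc0.symm⟩
  -- the span of the orbit of v
  set ψ : (Fin (2*q) → ZMod 3) → (ZMod r → ZMod 3) :=
    fun c => aeval (rhoLin r) (∑ i : Fin (2*q), C (c i) * X^(i:ℕ)) v with hψ_def
  have hψH : ∀ c, ψ c ∈ H := fun c => aeval_mem hH _ v hvH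
  have hψN : ∀ c, ψ c ∈ St11.blockSG r q ε := by
    intro c
    have h0 : aeval (rhoLin r) (hpoly q (-ε)) (ψ c) = 0 := by
      rw [hψ_def]
      simp only
      rw [← aeval_mul_apply, mul_comm, aeval_mul_apply]
      have hv0' : aeval (rhoLin r) (hpoly q (-ε)) v = 0 := hgI
      rw [hv0', map_zero]
    have := (St11.mem_blockSG_iff_aeval hr (-ε) (ψ c)).mp h0
    rwa [neg_neg] at this
  have hψinj : Function.Injective ψ := by
    intro c c' hcc
    have hdiff : (∑ i : Fin (2*q), C (c i) * X^(i:ℕ)) - (∑ i : Fin (2*q), C (c' i) * X^(i:ℕ)) ∈ I := by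
      rw [hmemI, map_sub, LinearMap.sub_apply]
      rw [hψ_def] at hcc
      simp only at hcc
      rw [hcc, sub_self]
    rw [hIeq, Ideal.mem_span_singleton] at hdiff
    have hdeg : ((∑ i : Fin (2*q), C (c i) * X^(i:ℕ)) - (∑ i : Fin (2*q), C (c' i) * X^(i:ℕ))).degree
        < (hpoly q (-ε)).degree := by
      have hd1 := degree_sum_fin_lt c
      have hd2 := degree_sum_fin_lt c'
      have hmono := (hpoly_monic_deg hq (-ε)).1
      have hdeg2 := (hpoly_monic_deg hq (-ε)).2
      have hdd : (hpoly q (-ε)).degree = ((2*q : ℕ) : WithBot ℕ) := by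
        rw [degree_eq_natDegree hmono.ne_zero, hdeg2]
      rw [hdd]
      exact lt_of_le_of_lt (degree_sub_le _ _) (sup_lt_iff.mpr ⟨hd1, hd2⟩)
    have hzero := eq_zero_of_dvd_of_degree_lt hdiff hdeg
    funext k
    have h2 := congrArg (fun p : (ZMod 3)[X] => p.coeff (k:ℕ)) hzero
    simp only [coeff_sub, coeff_zero] at h2
    rw [psum_coeff _ c k, psum_coeff _ c' k] at h2
    exact sub_eq_zero.mp h2
  -- cardinality
  have hrange : Set.range ψ = (St11.blockSG r q ε : Set (ZMod r → ZMod 3)) := by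
    apply Set.eq_of_subset_of_ncard_le
    · rintro x ⟨c, rfl⟩; exact hψN c
    · have h1 : (Set.range ψ).ncard = 3^(2*q) := by
        rw [← Set.image_univ, Set.ncard_image_of_injective _ hψinj, Set.ncard_univ,
          Nat.card_eq_fintype_card, Fintype.card_fun]
        simp [ZMod.card]
      rw [h1]
      exact blockSG_card_le hrq hq ε
    · exact Set.toFinite _
  intro n hn
  rw [← hrange] at hn
  obtain ⟨c, rfl⟩ := hn
  exact hψH c
lemma blockSG_rho_mem {r q : ℕ} (hr : 0 < r) {ε : ZMod 3} {n : ZMod r → ZMod 3}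
    (hn : n ∈ St11.blockSG r q ε) : rhoAct r n ∈ St11.blockSG r q ε := by
  intro j
  rw [St11.unroll_rho hr, St11.unroll_rho hr, St11.unroll_rho hr,
    show j + 2*q + 1 = (j+1) + 2*q from by ring, show j + q + 1 = (j+1) + q from by ring]
  exact hn (j+1)

open Polynomial in
lemma decomp_sum {r q : ℕ} (n : ZMod r → ZMod 3) :
    aeval (rhoLin r) ((1 - X^q) * hpoly q 1) n
      + aeval (rhoLin r) ((1 + X^q) * hpoly q (-1)) n = n := by
  have h := congrArg (fun p => aeval (rhoLin r) p n) (hpoly_bezout q)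
  simp only [map_add, LinearMap.add_apply, map_one, Module.End.one_apply] at h
  exact h

open Polynomial in
lemma decomp_mem1 {r q : ℕ} (hrq : r = 4*q) (hq : 0 < q) (n : ZMod r → ZMod 3) :
    aeval (rhoLin r) ((1 + X^q) * hpoly q (-1)) n ∈ St11.blockSG r q (-1) := by
  have hr : 0 < r := by omega
  apply (St11.mem_blockSG_iff_aeval hr 1 _).mp
  rw [← aeval_mul_apply,
    show hpoly q 1 * ((1 + X^q) * hpoly q (-1)) = (1 + X^q) * (X^(4*q) + 1) from by
      rw [← hpoly_mul q]; ring,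
    aeval_mul_apply, aeval_anni hrq hq, map_zero]

open Polynomial in
lemma decomp_mem2 {r q : ℕ} (hrq : r = 4*q) (hq : 0 < q) (n : ZMod r → ZMod 3) :
    aeval (rhoLin r) ((1 - X^q) * hpoly q 1) n ∈ St11.blockSG r q 1 := by
  have hr : 0 < r := by omega
  have h0 : aeval (rhoLin r) (hpoly q (-1)) (aeval (rhoLin r) ((1 - X^q) * hpoly q 1) n) = 0 := by
    rw [← aeval_mul_apply,
      show hpoly q (-1) * ((1 - X^q) * hpoly q 1) = (1 - X^q) * (X^(4*q) + 1) from by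
        rw [← hpoly_mul q]; ring,
      aeval_mul_apply, aeval_anni hrq hq, map_zero]
  have h := (St11.mem_blockSG_iff_aeval hr (-1) _).mp h0
  rwa [neg_neg] at h

def eltN (r q : ℕ) : ZMod r → ZMod 3 :=
  fun w => if w.val < 2*q then 1 else if w.val < 3*q then 0 else 1

def eltS (r q : ℕ) : ZMod r → ZMod 3 :=
  fun w => if w.val < q then -1 else if w.val < 2*q then 1 else if w.val < 3*q then 0 else 1

def deltaElt (r : ℕ) : ZMod r → ZMod 3 := fun w => if w = 0 then 1 else 0

lemma eltN_mem {r q : ℕ} (hrq : r = 4*q) (hq : 0 < q) : eltN r q ∈ Nset r := by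
  haveI : NeZero r := ⟨by omega⟩
  have h4 : r/4 = q := by omega
  refine ⟨fun _ => 1, fun _ => 0, fun i => ?_⟩
  have hi : (i:ℕ) < r/4 := i.isLt
  have v0 : (((i:ℕ) : ℕ) : ZMod r).val = (i:ℕ) := ZMod.val_cast_of_lt (by omega)
  have v1 : (((i:ℕ) + r/4 : ℕ) : ZMod r).val = (i:ℕ) + r/4 := ZMod.val_cast_of_lt (by omega)
  have v2 : (((i:ℕ) + r/2 : ℕ) : ZMod r).val = (i:ℕ) + r/2 := ZMod.val_cast_of_lt (by omega)
  have v3 : (((i:ℕ) + 3*(r/4) : ℕ) : ZMod r).val = (i:ℕ) + 3*(r/4) := ZMod.val_cast_of_lt (by omega)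
  refine ⟨?_, ?_, ?_, ?_⟩ <;> simp only [eltN, v0, v1, v2, v3]
  · rw [if_pos (by omega)]; simp
  · rw [if_pos (by omega)]
  · rw [if_neg (by omega), if_pos (by omega)]
  · rw [if_neg (by omega), if_neg (by omega)]; simp

lemma eltN_ne {r q : ℕ} (hrq : r = 4*q) (hq : 0 < q) : eltN r q ≠ 0 := by
  haveI : NeZero r := ⟨by omega⟩
  intro h
  have h0 := congrFun h 0
  rw [show eltN r q 0 = 1 from by rw [eltN]; rw [if_pos (by rw [ZMod.val_zero]; omega)]] at h0
  exact one_ne_zero h0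

lemma eltS_mem {r q : ℕ} (hrq : r = 4*q) (hq : 0 < q) : eltS r q ∈ NstarSet r := by
  haveI : NeZero r := ⟨by omega⟩
  have h4 : r/4 = q := by omega
  refine ⟨fun _ => 1, fun _ => 0, fun i => ?_⟩
  have hi : (i:ℕ) < r/4 := i.isLt
  have v0 : (((i:ℕ) : ℕ) : ZMod r).val = (i:ℕ) := ZMod.val_cast_of_lt (by omega)
  have v1 : (((i:ℕ) + r/4 : ℕ) : ZMod r).val = (i:ℕ) + r/4 := ZMod.val_cast_of_lt (by omega)
  have v2 : (((i:ℕ) + r/2 : ℕ) : ZMod r).val = (i:ℕ) + r/2 := ZMod.val_cast_of_lt (by omega)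
  have v3 : (((i:ℕ) + 3*(r/4) : ℕ) : ZMod r).val = (i:ℕ) + 3*(r/4) := ZMod.val_cast_of_lt (by omega)
  refine ⟨?_, ?_, ?_, ?_⟩ <;> simp only [eltS, v0, v1, v2, v3]
  · rw [if_pos (by omega)]; simp
  · rw [if_neg (by omega), if_pos (by omega)]
  · rw [if_neg (by omega), if_neg (by omega), if_pos (by omega)]
  · rw [if_neg (by omega), if_neg (by omega), if_neg (by omega)]; simp

lemma eltS_ne {r q : ℕ} (hrq : r = 4*q) (hq : 0 < q) : eltS r q ≠ 0 := by
  haveI : NeZero r := ⟨by omega⟩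
  intro h
  have h0 := congrFun h 0
  rw [show eltS r q 0 = -1 from by rw [eltS]; rw [if_pos (by rw [ZMod.val_zero]; omega)]] at h0
  have h0' : (-1 : ZMod 3) = 0 := h0
  have : (1 : ZMod 3) = 0 := by linear_combination -h0'
  exact one_ne_zero this

lemma delta_cast_ne {r q : ℕ} (hrq : r = 4*q) (hq : 0 < q) {m : ℕ} (hm0 : 0 < m) (hmr : m < r) :
    ((m : ℕ) : ZMod r) ≠ 0 := by
  haveI : NeZero r := ⟨by omega⟩
  intro h
  have := (ZMod.natCast_eq_zero_iff m r).mp h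
  have := Nat.le_of_dvd hm0 this
  omega

lemma delta_not_Nset {r q : ℕ} (hrq : r = 4*q) (hq : 0 < q) : deltaElt r ∉ Nset r := by
  haveI : NeZero r := ⟨by omega⟩
  rintro ⟨x, y, hxy⟩
  obtain ⟨e0, e1, e2, e3⟩ := hxy ⟨0, by omega⟩
  have hc1 : deltaElt r ((((0:ℕ) + r/4 : ℕ)) : ZMod r) = 0 := by
    rw [deltaElt, if_neg (delta_cast_ne hrq hq (by omega) (by omega))]
  have hc2 : deltaElt r ((((0:ℕ) + r/2 : ℕ)) : ZMod r) = 0 := by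
    rw [deltaElt, if_neg (delta_cast_ne hrq hq (by omega) (by omega))]
  have hx0 : x ⟨0, by omega⟩ = 0 := by rw [← e1]; exact hc1
  have hy0 : y ⟨0, by omega⟩ = 0 := by rw [← e2]; exact hc2
  have hc0 : deltaElt r (((0:ℕ) : ℕ) : ZMod r) = 1 := by
    rw [deltaElt, if_pos (by norm_num)]
  rw [hc0, hx0, hy0, add_zero] at e0
  exact one_ne_zero e0

lemma delta_not_NstarSet {r q : ℕ} (hrq : r = 4*q) (hq : 0 < q) : deltaElt r ∉ NstarSet r := by
  haveI : NeZero r := ⟨by omega⟩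
  rintro ⟨x, y, hxy⟩
  obtain ⟨e0, e1, e2, e3⟩ := hxy ⟨0, by omega⟩
  have hc1 : deltaElt r ((((0:ℕ) + r/4 : ℕ)) : ZMod r) = 0 := by
    rw [deltaElt, if_neg (delta_cast_ne hrq hq (by omega) (by omega))]
  have hc2 : deltaElt r ((((0:ℕ) + r/2 : ℕ)) : ZMod r) = 0 := by
    rw [deltaElt, if_neg (delta_cast_ne hrq hq (by omega) (by omega))]
  have hx0 : x ⟨0, by omega⟩ = 0 := by rw [← e1]; exact hc1
  have hy0 : y ⟨0, by omega⟩ = 0 := by rw [← e2]; exact hc2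
  have hc0 : deltaElt r (((0:ℕ) : ℕ) : ZMod r) = 1 := by
    rw [deltaElt, if_pos (by norm_num)]
  rw [hc0, hx0, hy0] at e0
  have : (1 : ZMod 3) = 0 := by linear_combination e0
  exact one_ne_zero this

theorem stmt_11 (a : ℕ) (ha : 2 ≤ a) (r : ℕ) (hr : r = 2 ^ a)
    (H : AddSubgroup (ZMod r → ZMod 3)) :
    ((∀ n ∈ H, rhoAct r n ∈ H) ∧ H ≠ ⊥ ∧ H ≠ ⊤) ↔
      ((H : Set (ZMod r → ZMod 3)) = Nset r ∨
       (H : Set (ZMod r → ZMod 3)) = NstarSet r) := by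
  have h24 : (2:ℕ)^a = 4 * 2^(a-2) := by
    have h1 : (2:ℕ)^a = 2^(2 + (a-2)) := by congr 1; omega
    rw [h1, pow_add]; norm_num
  have hq2' : (0:ℕ) < 2^(a-2) := Nat.pow_pos (by norm_num)
  set q := r / 4 with hq_def
  have hq2 : q = 2^(a-2) := by omega
  have hrq : r = 4 * q := by omega
  have hq : 0 < q := by omega
  have hr0 : 0 < r := by omega
  have hirrN : Irreducible (hpoly q (-(-1) : ZMod 3)) := by
    rw [neg_neg, hq2]; exact hpoly_irred ha 1 (Or.inl rfl)
  have hirrS : Irreducible (hpoly q (-1 : ZMod 3)) := by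
    rw [hq2]; exact hpoly_irred ha (-1) (Or.inr rfl)
  constructor
  · rintro ⟨hinv, hbot, htop⟩
    have hsplit : ∀ n, ∃ n1 n2, n1 ∈ St11.blockSG r q 1 ∧ n2 ∈ St11.blockSG r q (-1) ∧
        n1 + n2 = n ∧ (n ∈ H → n1 ∈ H ∧ n2 ∈ H) := by
      intro n
      exact ⟨_, _, decomp_mem2 hrq hq n, decomp_mem1 hrq hq n, decomp_sum n,
        fun hn => ⟨aeval_mem hinv _ n hn, aeval_mem hinv _ n hn⟩⟩
    by_cases hS : ∃ v ∈ H, v ∈ St11.blockSG r q 1 ∧ v ≠ 0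
    · by_cases hN : ∃ v ∈ H, v ∈ St11.blockSG r q (-1) ∧ v ≠ 0
      · exfalso
        apply htop
        have hsub1 : (St11.blockSG r q 1 : Set (ZMod r → ZMod 3)) ⊆ H := by
          obtain ⟨v, hvH, hvB, hv0⟩ := hS
          exact blockSG_subset_of_mem hrq hq hirrS hinv hvH hvB hv0
        have hsub2 : (St11.blockSG r q (-1) : Set (ZMod r → ZMod 3)) ⊆ H := by
          obtain ⟨v, hvH, hvB, hv0⟩ := hN
          exact blockSG_subset_of_mem hrq hq hirrN hinv hvH hvB hv0
        rw [AddSubgroup.eq_top_iff']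
        intro n
        have h1 := hsub1 (decomp_mem2 hrq hq n)
        have h2 := hsub2 (decomp_mem1 hrq hq n)
        have h3 := decomp_sum (r := r) (q := q) n
        rw [← h3]
        exact add_mem h1 h2
      · right
        rw [St11.NstarSet_eq hrq hq]
        apply Set.Subset.antisymm
        · intro n hn
          obtain ⟨n1, n2, h1B, h2B, hsum, hmem⟩ := hsplit n
          obtain ⟨h1H, h2H⟩ := hmem hn
          have hn2 : n2 = 0 := by
            by_contra h
            exact hN ⟨n2, h2H, h2B, h⟩
          rw [← hsum, hn2, add_zero]
          exact h1B
        · obtain ⟨v, hvH, hvB, hv0⟩ := hS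
          exact blockSG_subset_of_mem hrq hq hirrS hinv hvH hvB hv0
    · by_cases hN : ∃ v ∈ H, v ∈ St11.blockSG r q (-1) ∧ v ≠ 0
      · left
        rw [St11.Nset_eq hrq hq]
        apply Set.Subset.antisymm
        · intro n hn
          obtain ⟨n1, n2, h1B, h2B, hsum, hmem⟩ := hsplit n
          obtain ⟨h1H, h2H⟩ := hmem hn
          have hn1 : n1 = 0 := by
            by_contra h
            exact hS ⟨n1, h1H, h1B, h⟩
          rw [← hsum, hn1, zero_add]
          exact h2B
        · obtain ⟨v, hvH, hvB, hv0⟩ := hN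
          exact blockSG_subset_of_mem hrq hq hirrN hinv hvH hvB hv0
      · exfalso
        apply hbot
        rw [AddSubgroup.eq_bot_iff_forall]
        intro n hn
        obtain ⟨n1, n2, h1B, h2B, hsum, hmem⟩ := hsplit n
        obtain ⟨h1H, h2H⟩ := hmem hn
        have hn1 : n1 = 0 := by
          by_contra h
          exact hS ⟨n1, h1H, h1B, h⟩
        have hn2 : n2 = 0 := by
          by_contra h
          exact hN ⟨n2, h2H, h2B, h⟩
        rw [← hsum, hn1, hn2, add_zero]
  · rintro (hNs | hSs)
    · refine ⟨?_, ?_, ?_⟩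
      · intro n hn
        have hn' : n ∈ (H : Set (ZMod r → ZMod 3)) := hn
        rw [hNs, St11.Nset_eq hrq hq] at hn'
        have h1 := blockSG_rho_mem hr0 hn'
        have h2 : rhoAct r n ∈ (H : Set (ZMod r → ZMod 3)) := by
          rw [hNs, St11.Nset_eq hrq hq]
          exact h1
        exact h2
      · intro hb
        rw [hb] at hNs
        have h1 := eltN_mem hrq hq
        rw [← hNs] at h1
        exact eltN_ne hrq hq (AddSubgroup.mem_bot.mp h1)
      · intro ht
        rw [ht] at hNs
        have h1 : deltaElt r ∈ Nset r := by
          rw [← hNs]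
          exact Set.mem_univ _
        exact delta_not_Nset hrq hq h1
    · refine ⟨?_, ?_, ?_⟩
      · intro n hn
        have hn' : n ∈ (H : Set (ZMod r → ZMod 3)) := hn
        rw [hSs, St11.NstarSet_eq hrq hq] at hn'
        have h1 := blockSG_rho_mem hr0 hn'
        have h2 : rhoAct r n ∈ (H : Set (ZMod r → ZMod 3)) := by
          rw [hSs, St11.NstarSet_eq hrq hq]
          exact h1
        exact h2
      · intro hb
        rw [hb] at hSs
        have h1 := eltS_mem hrq hq
        rw [← hSs] at h1
        exact eltS_ne hrq hq (AddSubgroup.mem_bot.mp h1)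
      · intro ht
        rw [ht] at hSs
        have h1 : deltaElt r ∈ NstarSet r := by
          rw [← hSs]
          exact Set.mem_univ _
        exact delta_not_NstarSet hrq hq h1
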